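/- arXiv:0806.3740 — 3 statements merged into one kernel-verified Lean document; each statement's English description precedes it below -/
import Mathlib

section
/- If g ∈ GL_n(ℂ) satisfies gHg⁻¹ = H, then gTg⁻¹ = T; i.e., every element of GL_n(ℂ) normalizing H also normalizes the full diagonal torus T. -/
noncomputable section

abbrev GLn (n : ℕ) := GL (Fin n) ℂ

def Tset (n : ℕ) : Set (GLn n) :=
  {g | ∀ i j : Fin n, i ≠ j → (g : Matrix (Fin n) (Fin n) ℂ) i j = 0}

def Hset (n : ℕ) [NeZero n] : Set (GLn n) :=
  {g | g ∈ Tset n ∧ (g : Matrix (Fin n) (Fin n) ℂ) 0 0 = 1}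

lemma Tset.eq_diagonal {n : ℕ} {t : GLn n} (ht : t ∈ Tset n) :
    (t : Matrix (Fin n) (Fin n) ℂ) =
      Matrix.diagonal (fun i => (t : Matrix (Fin n) (Fin n) ℂ) i i) := by
  ext i j
  by_cases h : i = j
  · subst h; simp [Matrix.diagonal_apply]
  · rw [Matrix.diagonal_apply_ne _ h]; exact ht i j h

lemma Tset.diag_ne_zero {n : ℕ} {t : GLn n} (ht : t ∈ Tset n) (i : Fin n) :
    (t : Matrix (Fin n) (Fin n) ℂ) i i ≠ 0 := by
  have hdet : IsUnit (t : Matrix (Fin n) (Fin n) ℂ).det :=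
    (Matrix.isUnit_iff_isUnit_det _).mp t.isUnit
  rw [Tset.eq_diagonal ht, Matrix.det_diagonal] at hdet
  have := isUnit_iff_ne_zero.mp hdet
  intro h0
  exact this (Finset.prod_eq_zero (Finset.mem_univ i) h0)

lemma conj_subset {n : ℕ} [NeZero n] (g : GLn n)
    (hH : ∀ x ∈ Hset n, g * x * g⁻¹ ∈ Hset n) :
    ∀ t ∈ Tset n, g * t * g⁻¹ ∈ Tset n := by
  intro t ht
  set c : ℂ := (t : Matrix (Fin n) (Fin n) ℂ) 0 0 with hc
  have hc0 : c ≠ 0 := Tset.diag_ne_zero ht 0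
  -- diagonal unit h with entries c⁻¹ * t i i
  set d : Fin n → ℂ := fun i => c⁻¹ * (t : Matrix (Fin n) (Fin n) ℂ) i i with hd
  have hd0 : ∀ i, d i ≠ 0 := fun i =>
    mul_ne_zero (inv_ne_zero hc0) (Tset.diag_ne_zero ht i)
  set h : GLn n := ⟨Matrix.diagonal d, Matrix.diagonal (fun i => (d i)⁻¹),
    by rw [Matrix.diagonal_mul_diagonal]; simp [mul_inv_cancel₀ (hd0 _)],
    by rw [Matrix.diagonal_mul_diagonal]; simp [inv_mul_cancel₀ (hd0 _)]⟩ with hhdef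
  have hhH : h ∈ Hset n := by
    constructor
    · intro i j hij
      show Matrix.diagonal d i j = 0
      exact Matrix.diagonal_apply_ne _ hij
    · show Matrix.diagonal d 0 0 = 1
      simp [Matrix.diagonal_apply_eq, hd, inv_mul_cancel₀ hc0]; rw [← hc, inv_mul_cancel₀ hc0]
  have hcu : IsUnit c := isUnit_iff_ne_zero.mpr hc0
  set s : GLn n := Units.map (Matrix.scalar (Fin n)).toMonoidHom hcu.unit with hs
  have hsval : (s : Matrix (Fin n) (Fin n) ℂ) = c • (1 : Matrix (Fin n) (Fin n) ℂ) := by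
    simp [hs, Matrix.scalar, Matrix.smul_one_eq_diagonal]
  have hts : t = s * h := by
    apply Units.ext
    show (t : Matrix (Fin n) (Fin n) ℂ) = (s : Matrix _ _ ℂ) * Matrix.diagonal d
    rw [hsval, Matrix.smul_mul, one_mul, Tset.eq_diagonal ht]
    ext i j
    by_cases hij : i = j
    · subst hij
      simp [Matrix.diagonal_apply_eq, hd, mul_inv_cancel_left₀ hc0]
    · simp [Matrix.diagonal_apply_ne _ hij]
  have hsg : ∀ x : GLn n, s * x = x * s := by
    intro x
    apply Units.ext
    show (s : Matrix (Fin n) (Fin n) ℂ) * (x : Matrix (Fin n) (Fin n) ℂ)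
        = (x : Matrix (Fin n) (Fin n) ℂ) * (s : Matrix (Fin n) (Fin n) ℂ)
    rw [hsval]
    simp [Matrix.smul_mul, Matrix.mul_smul]
  have key : g * t * g⁻¹ = s * (g * h * g⁻¹) := by
    rw [hts, ← mul_assoc, ← hsg g, mul_assoc, mul_assoc, mul_assoc]
  have hghg := hH h hhH
  intro i j hij
  rw [key]
  show ((s : Matrix (Fin n) (Fin n) ℂ) * ((g * h * g⁻¹ : GLn n) : Matrix (Fin n) (Fin n) ℂ)) i j = 0
  rw [hsval, Matrix.smul_mul, one_mul, Matrix.smul_apply, hghg.1 i j hij, smul_zero]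

theorem normalizes_H_normalizes_T (n : ℕ) [NeZero n] (hn : 2 ≤ n) (g : GLn n)
    (hg : (fun h => g * h * g⁻¹) '' Hset n = Hset n) :
    (fun h => g * h * g⁻¹) '' Tset n = Tset n := by
  have hH1 : ∀ x ∈ Hset n, g * x * g⁻¹ ∈ Hset n := by
    intro x hx
    rw [← hg]
    exact ⟨x, hx, rfl⟩
  have hH2 : ∀ x ∈ Hset n, g⁻¹ * x * (g⁻¹)⁻¹ ∈ Hset n := by
    intro x hx
    rw [← hg] at hx
    obtain ⟨y, hy, rfl⟩ := hx
    simpa [mul_assoc] using hy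
  apply Set.eq_of_subset_of_subset
  · rintro _ ⟨t, ht, rfl⟩
    exact conj_subset g hH1 t ht
  · intro t ht
    refine ⟨g⁻¹ * t * (g⁻¹)⁻¹, conj_subset g⁻¹ hH2 t ht, ?_⟩
    simp [mul_assoc]

end
end

section
/- Consider the action of the multiplicative group ℂˣ on the polynomial ring ℂ[x₁, …, xₙ] by ℂ-algebra automorphisms determined on variables by t·x₁ = t⁻¹x₁ and t·xᵢ = t xᵢ for 2 ≤ i ≤ n. Then the subalgebra of ℂˣ-invariant polynomials equals the ℂ-subalgebra generated by x₁x₂, x₁x₃, …, x₁xₙ, and the n−1 polynomials x₁x₂, …, x₁xₙ are algebraically independent over ℂ. (This computes the cohomology ring H•(f, f₀̄; ℂ) ≅ ℂ[Y₂∂₁*, …, Yₙ∂₁*] of the detecting subalgebra f of W(n).) -/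
/-!
STATEMENT 12: the invariants of `ℂ[x₁,…,xₙ]` under the `ℂˣ`-action
`t·x₁ = t⁻¹x₁`, `t·xᵢ = t·xᵢ` (`i ≥ 2`) form the subalgebra generated by
`x₁x₂, …, x₁xₙ`, and these `n−1` polynomials are algebraically independent.
-/

noncomputable section

open MvPolynomial

/-- The ℂ-algebra endomorphism of `ℂ[x₁,…,xₙ]` determined on variables by
`t·x₁ = t⁻¹x₁` and `t·xᵢ = t·xᵢ` for `i ≥ 2`. -/
def scaleAct (n : ℕ) [NeZero n] (t : ℂˣ) :
    MvPolynomial (Fin n) ℂ →ₐ[ℂ] MvPolynomial (Fin n) ℂ :=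
  aeval fun i : Fin n => (if i = 0 then ((t⁻¹ : ℂˣ) : ℂ) else (t : ℂ)) • X i

lemma scaleAct_monomial (n : ℕ) [NeZero n] (t : ℂˣ) (d : Fin n →₀ ℕ) (a : ℂ) :
    scaleAct n t (monomial d a)
      = C (∏ i, (if i = 0 then ((t⁻¹ : ℂˣ) : ℂ) else (t : ℂ)) ^ d i) * monomial d a := by
  rw [scaleAct, aeval_monomial, Finsupp.prod_pow]
  rw [monomial_eq, Finsupp.prod_pow]
  simp only [smul_pow, Algebra.smul_def, algebraMap_eq]
  simp only [mul_pow, ← C_pow]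
  rw [Finset.prod_mul_distrib, ← map_prod]
  push_cast [map_prod]
  ring

lemma coeff_scaleAct (n : ℕ) [NeZero n] (t : ℂˣ) (f : MvPolynomial (Fin n) ℂ)
    (d : Fin n →₀ ℕ) :
    coeff d (scaleAct n t f)
      = (∏ i, (if i = 0 then ((t⁻¹ : ℂˣ) : ℂ) else (t : ℂ)) ^ d i) * coeff d f := by
  conv_lhs => rw [f.as_sum]
  rw [map_sum]
  simp only [scaleAct_monomial, coeff_sum, coeff_C_mul, coeff_monomial, mul_ite, mul_zero]
  rw [Finset.sum_ite_eq' f.support d]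
  split_ifs with h
  · rfl
  · rw [notMem_support_iff.mp h, mul_zero]

lemma weight_eval (n : ℕ) [NeZero n] (t : ℂˣ) (d : Fin n →₀ ℕ) :
    (∏ i, (if i = 0 then ((t⁻¹ : ℂˣ) : ℂ) else (t : ℂ)) ^ d i)
      = ((t⁻¹ : ℂˣ) : ℂ) ^ d 0 * (t : ℂ) ^ (∑ i ∈ Finset.univ.erase 0, d i) := by
  rw [← Finset.mul_prod_erase Finset.univ _ (Finset.mem_univ 0), if_pos rfl]
  congr 1
  rw [← Finset.prod_pow_eq_pow_sum]
  exact Finset.prod_congr rfl fun i hi => by rw [if_neg (Finset.mem_erase.mp hi).1]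

lemma monomial_balanced (n : ℕ) [NeZero n] (d : Fin n →₀ ℕ) (a : ℂ)
    (h : d 0 = ∑ i ∈ Finset.univ.erase 0, d i) :
    monomial d a
      = C a * ∏ i ∈ Finset.univ.erase (0 : Fin n),
          (X (0 : Fin n) * X i : MvPolynomial (Fin n) ℂ) ^ d i := by
  rw [monomial_eq, Finsupp.prod_pow,
    ← Finset.mul_prod_erase Finset.univ _ (Finset.mem_univ 0)]
  simp only [mul_pow]
  rw [Finset.prod_mul_distrib, Finset.prod_pow_eq_pow_sum, ← h]

theorem units_invariants_of_polynomial_ring (n : ℕ) [NeZero n] (hn : 2 ≤ n) :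
    -- the subalgebra of `ℂˣ`-invariant polynomials is generated by `x₁x₂, …, x₁xₙ` …
    (∀ f : MvPolynomial (Fin n) ℂ, (∀ t : ℂˣ, scaleAct n t f = f) ↔
      f ∈ Algebra.adjoin ℂ
        (Set.range fun i : {i : Fin n // i ≠ 0} => X (0 : Fin n) * X (i : Fin n))) ∧
    -- … and the `n−1` polynomials `x₁x₂, …, x₁xₙ` are algebraically independent over ℂ.
    AlgebraicIndependent ℂ
      (fun i : {i : Fin n // i ≠ 0} =>
        (X (0 : Fin n) * X (i : Fin n) : MvPolynomial (Fin n) ℂ)) := by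
  constructor
  · intro f
    constructor
    · intro hf
      have key : ∀ d ∈ f.support, d 0 = ∑ i ∈ Finset.univ.erase 0, d i := by
        intro d hd
        have ha : coeff d f ≠ 0 := mem_support_iff.mp hd
        set t2 : ℂˣ := Units.mk0 (2 : ℂ) (by norm_num) with ht2
        have h2 : (∏ i, (if i = 0 then ((t2⁻¹ : ℂˣ) : ℂ) else (t2 : ℂ)) ^ d i)
            * coeff d f = 1 * coeff d f := by
          rw [← coeff_scaleAct n t2 f d, hf t2, one_mul]
        have h3 := mul_right_cancel₀ ha h2
        rw [weight_eval] at h3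
        have h4 : ((2 : ℂ)⁻¹) ^ d 0 * (2 : ℂ) ^ (∑ i ∈ Finset.univ.erase 0, d i) = 1 := by
          simpa [ht2] using h3
        rw [inv_pow, inv_mul_eq_one₀ (pow_ne_zero _ two_ne_zero)] at h4
        have h5 : (2 : ℕ) ^ d 0 = 2 ^ (∑ i ∈ Finset.univ.erase 0, d i) := by
          exact_mod_cast h4
        exact Nat.pow_right_injective le_rfl h5
      rw [f.as_sum]
      apply Subalgebra.sum_mem
      intro d hd
      rw [monomial_balanced n d _ (key d hd)]
      apply Subalgebra.mul_mem
      · simpa [algebraMap_eq] using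
          (Algebra.adjoin ℂ (Set.range fun i : {i : Fin n // i ≠ 0} =>
            (X (0 : Fin n) * X (i : Fin n) : MvPolynomial (Fin n) ℂ))).algebraMap_mem (coeff d f)
      · apply Subalgebra.prod_mem
        intro i hi
        apply Subalgebra.pow_mem
        exact Algebra.subset_adjoin ⟨⟨i, (Finset.mem_erase.mp hi).1⟩, rfl⟩
    · intro hf t
      have hX : ∀ j : Fin n, scaleAct n t (X j)
          = (if j = 0 then ((t⁻¹ : ℂˣ) : ℂ) else (t : ℂ)) • X j := fun j => aeval_X _ j
      induction hf using Algebra.adjoin_induction with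
      | mem g hg =>
        obtain ⟨i, rfl⟩ := hg
        rw [map_mul, hX, hX, if_pos rfl, if_neg i.2, smul_mul_smul_comm]
        rw [Units.inv_mul, one_smul]
      | algebraMap r => exact (scaleAct n t).commutes r
      | add a b _ _ ha hb => rw [map_add, ha, hb]
      | mul a b _ _ ha hb => rw [map_mul, ha, hb]
  · set φ : MvPolynomial (Fin n) ℂ →ₐ[ℂ] MvPolynomial {i : Fin n // i ≠ 0} ℂ :=
      aeval (fun j : Fin n => if h : j = 0 then 1 else X ⟨j, h⟩) with hφ
    apply AlgebraicIndependent.of_comp φ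
    have hcomp : (φ ∘ fun i : {i : Fin n // i ≠ 0} =>
        (X (0 : Fin n) * X (i : Fin n) : MvPolynomial (Fin n) ℂ))
        = fun i => X i := by
      funext i
      simp [hφ, dif_neg i.2]
    rw [hcomp]
    exact MvPolynomial.algebraicIndependent_X _ _

end
end

section
/- Inside the superalgebra of ℂ-linear endomorphisms of Λ(V), for c = (c₁,…,cₙ) ∈ ℂⁿ let h_c denote the even superderivation determined by h_c(eᵢ) = cᵢ eᵢ for all i; let ∂₁ denote the odd superderivation determined by ∂₁(e₁) = 1 and ∂₁(eᵢ) = 0 for i ≥ 2; and for 2 ≤ i ≤ n let E_i denote the odd superderivation determined by E_i(eᵢ) = e₁ ∧ eᵢ and E_i(e_j) = 0 for j ≠ i. Then the subspace f = span{h_c : c ∈ ℂⁿ} ⊕ span{∂₁, E₂, …, Eₙ} is closed under the supercommutator [D, D′] = D∘D′ − (−1)^{pp′} D′∘D (p, p′ the parities of D, D′); explicitly, [h_c, h_{c′}] = 0, [h_c, ∂₁] = −c₁∂₁, [h_c, E_i] = c₁E_i, [∂₁, ∂₁] = 0, [E_i, E_j] = 0 for all i, j, and [∂₁, E_i] = h_{ε_i}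 where ε_i ∈ ℂⁿ is the i-th standard basis vector. (Hence f is a Lie subsuperalgebra of W(n), the detecting subalgebra.) -/
/-!
STATEMENT 15: the detecting subalgebra `f = span{h_c} ⊕ span{∂₁, E₂, …, Eₙ}` of
`W(n)` is closed under the supercommutator, with the explicit bracket relations
`[h_c,h_{c′}] = 0`, `[h_c,∂₁] = −c₁∂₁`, `[h_c,E_i] = c₁E_i`, `[∂₁,∂₁] = 0`,
`[E_i,E_j] = 0`, `[∂₁,E_i] = h_{ε_i}`.
-/

noncomputable section

open ExteriorAlgebra

/-- `V = ℂⁿ`. -/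
abbrev Vn (n : ℕ) := Fin n → ℂ

/-- The exterior algebra `Λ(V)`. -/
abbrev Lam (n : ℕ) := ExteriorAlgebra ℂ (Vn n)

/-- The `m`-th exterior power `Λᵐ V`, as a submodule of the exterior algebra. -/
def lamPow (n m : ℕ) : Submodule ℂ (Lam n) :=
  LinearMap.range (ι ℂ : Vn n →ₗ[ℂ] Lam n) ^ m

/-- The parity component `Λ(V)_p` (`p ∈ ℤ/2`). -/
def lamPar (n : ℕ) (p : ZMod 2) : Submodule ℂ (Lam n) :=
  ⨆ m : ℕ, ⨆ _ : ((m : ZMod 2) = p), lamPow n m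

/-- The sign `(−1)^{pq}` for parities `p q : ℤ/2`. -/
def parSign (p q : ZMod 2) : ℂ := (-1 : ℂ) ^ (p.val * q.val)

/-- `D : Λ(V) → Λ(V)` is a superderivation of parity `p`. -/
def IsSuperDer (n : ℕ) (p : ZMod 2) (D : Lam n →ₗ[ℂ] Lam n) : Prop :=
  (∀ q : ZMod 2, ∀ x ∈ lamPar n q, D x ∈ lamPar n (p + q)) ∧
  (∀ q : ZMod 2, ∀ x ∈ lamPar n q, ∀ y : Lam n,
      D (x * y) = D x * y + parSign p q • (x * D y))

/-- The standard basis vector `eᵢ` of `ℂⁿ`. -/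
def ev (n : ℕ) (i : Fin n) : Vn n := Pi.single i 1

namespace Det15
variable {n : ℕ}
lemma lamPow_le_lamPar (m : ℕ) : lamPow n m ≤ lamPar n (m : ZMod 2) :=
  le_iSup_of_le m (le_iSup_of_le rfl le_rfl)
lemma one_mem_lamPar : (1 : Lam n) ∈ lamPar n 0 := by
  have h1 : (1 : Lam n) ∈ lamPow n 0 := by
    rw [lamPow, pow_zero]; exact Submodule.one_le.mp le_rfl
  simpa using lamPow_le_lamPar 0 h1
lemma ι_mem_lamPar (v : Vn n) : (ι ℂ v : Lam n) ∈ lamPar n 1 := by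
  have h1 : (ι ℂ v : Lam n) ∈ lamPow n 1 := by
    rw [lamPow, pow_one]; exact LinearMap.mem_range_self _ v
  simpa using lamPow_le_lamPar 1 h1
lemma parSign_p_zero (p : ZMod 2) : parSign p 0 = 1 := by simp [parSign]
lemma superDer_one {p : ZMod 2} {D : Lam n →ₗ[ℂ] Lam n} (hD : IsSuperDer n p D) :
    D 1 = 0 := by
  have := hD.2 0 1 one_mem_lamPar 1
  simp [parSign_p_zero] at this
  linear_combination (norm := module) this

lemma superDer_eq_zero {p : ZMod 2} {D : Lam n →ₗ[ℂ] Lam n} (hD : IsSuperDer n p D)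
    (h0 : ∀ v : Vn n, D (ι ℂ v) = 0) : D = 0 := by
  have key : ∀ m : ℕ, ∀ x ∈ lamPow n m, D x = 0 := by
    intro m
    induction m with
    | zero =>
      intro x hx
      rw [lamPow, pow_zero] at hx
      obtain ⟨y, rfl⟩ := hx
      simp [superDer_one hD]
    | succ m ih =>
      intro x hx
      rw [lamPow, pow_succ] at hx
      refine Submodule.mul_induction_on hx ?_ ?_
      · rintro a ha b ⟨v, rfl⟩
        rw [hD.2 (m : ZMod 2) a (lamPow_le_lamPar m ha) (ι ℂ v)]
        simp [ih a ha, h0]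
      · intro x y hx' hy'; rw [map_add, hx', hy', add_zero]
  have hall : ∀ x : Lam n, D x = 0 :=
    DirectSum.Decomposition.inductionOn (fun i => ⋀[ℂ]^i (Vn n)) (by simp)
      (fun {i} m => key i m m.2) (fun a b ha hb => by simp [ha, hb])
  exact LinearMap.ext fun x => by simp [hall x]

lemma isSuperDer_zero (p : ZMod 2) : IsSuperDer n p 0 := by
  constructor
  · intro q x hx; simp [Submodule.zero_mem]
  · intro q x hx y; simp

lemma superDer_sub {p : ZMod 2} {D D' : Lam n →ₗ[ℂ] Lam n}
    (hD : IsSuperDer n p D) (hD' : IsSuperDer n p D') : IsSuperDer n p (D - D') := by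
  constructor
  · intro q x hx
    exact sub_mem (hD.1 q x hx) (hD'.1 q x hx)
  · intro q x hx y
    simp only [LinearMap.sub_apply, hD.2 q x hx y, hD'.2 q x hx y, sub_mul, mul_sub,
      smul_sub]
    module

lemma superDer_smul {p : ZMod 2} (c : ℂ) {D : Lam n →ₗ[ℂ] Lam n}
    (hD : IsSuperDer n p D) : IsSuperDer n p (c • D) := by
  constructor
  · intro q x hx
    exact Submodule.smul_mem _ _ (hD.1 q x hx)
  · intro q x hx y
    simp only [LinearMap.smul_apply, hD.2 q x hx y, smul_mul_assoc, mul_smul_comm,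
      smul_add, smul_smul]
    module

lemma superComm {p p' : ZMod 2} {D D' : Lam n →ₗ[ℂ] Lam n}
    (hD : IsSuperDer n p D) (hD' : IsSuperDer n p' D') :
    IsSuperDer n (p + p') (D ∘ₗ D' - parSign p p' • (D' ∘ₗ D)) := by
  constructor
  · intro q x hx
    have h1 : D (D' x) ∈ lamPar n (p + p' + q) := by
      have := hD.1 _ _ (hD'.1 q x hx); rwa [← add_assoc] at this
    have h2 : D' (D x) ∈ lamPar n (p + p' + q) := by
      have := hD'.1 _ _ (hD.1 q x hx)
      rwa [show p' + (p + q) = p + p' + q by ring] at this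
    simpa using sub_mem h1 (Submodule.smul_mem _ _ h2)
  · intro q x hx y
    have hDx := hD.1 q x hx
    have hD'x := hD'.1 q x hx
    simp only [LinearMap.sub_apply, LinearMap.comp_apply, LinearMap.smul_apply]
    rw [hD'.2 q x hx y, hD.2 q x hx y, map_add, map_add, map_smul, map_smul,
        hD.2 _ _ hD'x y, hD'.2 _ _ hDx y, hD.2 q x hx (D' y), hD'.2 q x hx (D y)]
    have hc : ∀ a : ZMod 2, a = 0 ∨ a = 1 := by decide
    rcases hc p with rfl | rfl <;> rcases hc p' with rfl | rfl <;> rcases hc q with rfl | rfl <;>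
      simp only [parSign, show ((0 : ZMod 2)).val = 0 from rfl,
        show ((1 : ZMod 2)).val = 1 from rfl, show ((1 + 1 : ZMod 2)) = 0 from rfl,
        show ((0 + 1 : ZMod 2)) = 1 from rfl, show ((1 + 0 : ZMod 2)) = 1 from rfl,
        show ((0 + 0 : ZMod 2)) = 0 from rfl, Nat.mul_zero, Nat.zero_mul, Nat.mul_one,
        pow_zero, pow_one, one_smul, neg_smul, neg_neg, sub_mul, mul_sub, add_mul, mul_add,
        smul_sub, smul_add, smul_mul_assoc, mul_smul_comm, smul_smul, neg_mul, mul_neg,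
        smul_neg] <;>
      module

lemma parSign_one_one : parSign 1 1 = -1 := by
  simp [parSign, show ((1 : ZMod 2)).val = 1 from rfl]

lemma parSign_zero_q (q : ZMod 2) : parSign 0 q = 1 := by simp [parSign]

lemma superComm00 {D D' : Lam n →ₗ[ℂ] Lam n} (hD : IsSuperDer n 0 D)
    (hD' : IsSuperDer n 0 D') : IsSuperDer n 0 (D ∘ₗ D' - D' ∘ₗ D) := by
  simpa [parSign_zero_q] using superComm hD hD'

lemma superComm01 {D D' : Lam n →ₗ[ℂ] Lam n} (hD : IsSuperDer n 0 D)
    (hD' : IsSuperDer n 1 D') : IsSuperDer n 1 (D ∘ₗ D' - D' ∘ₗ D) := by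
  simpa [parSign_zero_q] using superComm hD hD'

lemma superComm11 {D D' : Lam n →ₗ[ℂ] Lam n} (hD : IsSuperDer n 1 D)
    (hD' : IsSuperDer n 1 D') : IsSuperDer n 0 (D ∘ₗ D' + D' ∘ₗ D) := by
  have h1 := superComm hD hD'
  rw [parSign_one_one] at h1
  have e : D ∘ₗ D' - (-1 : ℂ) • (D' ∘ₗ D) = D ∘ₗ D' + D' ∘ₗ D := by
    module
  rw [e, show (1 + 1 : ZMod 2) = 0 from rfl] at h1
  exact h1

lemma ι_apply_eq_sum (D : Lam n →ₗ[ℂ] Lam n) (v : Vn n) :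
    D (ι ℂ v) = ∑ i, v i • D (ι ℂ (ev n i)) := by
  have hv : v = ∑ i, v i • ev n i := by
    conv_lhs => rw [← Finset.univ_sum_single v]
    exact Finset.sum_congr rfl fun i _ => by
      rw [ev, ← Pi.single_smul, smul_eq_mul, mul_one]
  conv_lhs => rw [hv]
  simp

lemma superDer_ext_basis {p : ZMod 2} {D D' : Lam n →ₗ[ℂ] Lam n}
    (hD : IsSuperDer n p D) (hD' : IsSuperDer n p D')
    (hv : ∀ i : Fin n, D (ι ℂ (ev n i)) = D' (ι ℂ (ev n i))) : D = D' := by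
  have h0 : D - D' = 0 := by
    refine superDer_eq_zero (superDer_sub hD hD') fun v => ?_
    simp only [LinearMap.sub_apply, ι_apply_eq_sum D v, ι_apply_eq_sum D' v]
    simp [hv]
  exact sub_eq_zero.mp h0

end Det15

set_option maxHeartbeats 1600000

theorem detecting_subalgebra_closed (n : ℕ) [NeZero n] (hn : 2 ≤ n)
    -- `h_c` is the even superderivation with `h_c(eᵢ) = cᵢ eᵢ` …
    (h : (Fin n → ℂ) → (Lam n →ₗ[ℂ] Lam n))
    (hEven : ∀ c, IsSuperDer n 0 (h c))
    (hVal : ∀ c i, h c (ι ℂ (ev n i)) = c i • ι ℂ (ev n i))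
    -- `∂₁` is the odd superderivation with `∂₁(e₁) = 1`, `∂₁(eᵢ) = 0` for `i ≥ 2` …
    (D1 : Lam n →ₗ[ℂ] Lam n)
    (hD1odd : IsSuperDer n 1 D1)
    (hD1val₀ : D1 (ι ℂ (ev n 0)) = 1)
    (hD1val : ∀ i : Fin n, i ≠ 0 → D1 (ι ℂ (ev n i)) = 0)
    -- … and for `i ≥ 2`, `E_i` is the odd superderivation with `E_i(eᵢ) = e₁ ∧ eᵢ`
    -- and `E_i(e_j) = 0` for `j ≠ i`.
    (E : Fin n → (Lam n →ₗ[ℂ] Lam n))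
    (hEodd : ∀ i : Fin n, i ≠ 0 → IsSuperDer n 1 (E i))
    (hEval : ∀ i : Fin n, i ≠ 0 → E i (ι ℂ (ev n i)) = ι ℂ (ev n 0) * ι ℂ (ev n i))
    (hEval' : ∀ i j : Fin n, i ≠ 0 → j ≠ i → E i (ι ℂ (ev n j)) = 0) :
    -- the subspace `f = span{h_c : c} ⊕ span{∂₁, E₂, …, Eₙ}` is closed under the
    -- supercommutator `[D,D′] = D∘D′ − (−1)^{pp′} D′∘D` …
    (∀ D ∈ Submodule.span ℂ (Set.range h), ∀ D' ∈ Submodule.span ℂ (Set.range h),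
        D ∘ₗ D' - D' ∘ₗ D ∈
          Submodule.span ℂ (Set.range h) ⊔
            Submodule.span ℂ ({D1} ∪ {D'' | ∃ i : Fin n, i ≠ 0 ∧ D'' = E i})) ∧
    (∀ D ∈ Submodule.span ℂ (Set.range h),
      ∀ D' ∈ Submodule.span ℂ ({D1} ∪ {D'' | ∃ i : Fin n, i ≠ 0 ∧ D'' = E i}),
        D ∘ₗ D' - D' ∘ₗ D ∈
          Submodule.span ℂ (Set.range h) ⊔
            Submodule.span ℂ ({D1} ∪ {D'' | ∃ i : Fin n, i ≠ 0 ∧ D'' = E i})) ∧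
    (∀ D ∈ Submodule.span ℂ ({D1} ∪ {D'' | ∃ i : Fin n, i ≠ 0 ∧ D'' = E i}),
      ∀ D' ∈ Submodule.span ℂ ({D1} ∪ {D'' | ∃ i : Fin n, i ≠ 0 ∧ D'' = E i}),
        D ∘ₗ D' + D' ∘ₗ D ∈
          Submodule.span ℂ (Set.range h) ⊔
            Submodule.span ℂ ({D1} ∪ {D'' | ∃ i : Fin n, i ≠ 0 ∧ D'' = E i})) ∧
    -- … explicitly:  `[h_c, h_{c′}] = 0` …
    (∀ c c', h c ∘ₗ h c' - h c' ∘ₗ h c = 0) ∧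
    -- … `[h_c, ∂₁] = −c₁ ∂₁` …
    (∀ c, h c ∘ₗ D1 - D1 ∘ₗ h c = (-(c 0)) • D1) ∧
    -- … `[h_c, E_i] = c₁ E_i` …
    (∀ c, ∀ i : Fin n, i ≠ 0 → h c ∘ₗ E i - E i ∘ₗ h c = (c 0) • E i) ∧
    -- … `[∂₁, ∂₁] = 0` …
    (D1 ∘ₗ D1 + D1 ∘ₗ D1 = 0) ∧
    -- … `[E_i, E_j] = 0` for all `i, j` …
    (∀ i j : Fin n, i ≠ 0 → j ≠ 0 → E i ∘ₗ E j + E j ∘ₗ E i = 0) ∧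
    -- … and `[∂₁, E_i] = h_{ε_i}`.
    (∀ i : Fin n, i ≠ 0 → D1 ∘ₗ E i + E i ∘ₗ D1 = h (Pi.single i 1)) := by
  classical
  -- the explicit relations
  have rel4 : ∀ c c', h c ∘ₗ h c' - h c' ∘ₗ h c = 0 := by
    intro c c'
    refine Det15.superDer_ext_basis (Det15.superComm00 (hEven c) (hEven c'))
      (Det15.isSuperDer_zero 0) fun i => ?_
    simp [hVal, smul_smul, mul_comm]
  have rel5 : ∀ c, h c ∘ₗ D1 - D1 ∘ₗ h c = (-(c 0)) • D1 := by
    intro c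
    refine Det15.superDer_ext_basis (Det15.superComm01 (hEven c) hD1odd)
      (Det15.superDer_smul _ hD1odd) fun i => ?_
    by_cases hi : i = 0
    · subst hi
      simp [hVal, hD1val₀, Det15.superDer_one (hEven c)]
    · simp [hVal, hD1val i hi]
  have rel6 : ∀ c, ∀ i : Fin n, i ≠ 0 → h c ∘ₗ E i - E i ∘ₗ h c = (c 0) • E i := by
    intro c i hi
    refine Det15.superDer_ext_basis (Det15.superComm01 (hEven c) (hEodd i hi))
      (Det15.superDer_smul _ (hEodd i hi)) fun j => ?_
    simp only [LinearMap.sub_apply, LinearMap.comp_apply, LinearMap.smul_apply]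
    by_cases hj : j = i
    · rw [hj, hEval i hi, hVal, map_smul, hEval i hi,
        (hEven c).2 1 _ (Det15.ι_mem_lamPar (ev n 0)) (ι ℂ (ev n i)), hVal, hVal,
        Det15.parSign_zero_q]
      simp only [one_smul, smul_mul_assoc, mul_smul_comm, smul_smul]
      module
    · rw [hEval' i j hi hj, hVal, map_smul, hEval' i j hi hj]
      simp only [map_zero, smul_zero, sub_zero]
  have rel7 : D1 ∘ₗ D1 + D1 ∘ₗ D1 = 0 := by
    refine Det15.superDer_ext_basis (Det15.superComm11 hD1odd hD1odd)
      (Det15.isSuperDer_zero 0) fun i => ?_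
    by_cases hi : i = 0
    · subst hi; simp [hD1val₀, Det15.superDer_one hD1odd]
    · simp [hD1val i hi]
  have hsq : ∀ (k : Fin n), ι ℂ (ev n 0) * (ι ℂ (ev n 0) * ι ℂ (ev n k)) = (0 : Lam n) := by
    intro k; rw [← mul_assoc, ι_sq_zero, zero_mul]
  have hE0 : ∀ (k : Fin n), k ≠ 0 → ∀ (l : Fin n),
      E k (ι ℂ (ev n 0) * ι ℂ (ev n l)) = - (ι ℂ (ev n 0) * E k (ι ℂ (ev n l))) := by
    intro k hk l
    rw [(hEodd k hk).2 1 _ (Det15.ι_mem_lamPar (ev n 0)) (ι ℂ (ev n l)),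
      hEval' k 0 hk (Ne.symm hk), zero_mul, zero_add, Det15.parSign_one_one]
    module
  have rel8 : ∀ i j : Fin n, i ≠ 0 → j ≠ 0 → E i ∘ₗ E j + E j ∘ₗ E i = 0 := by
    intro i j hi hj
    refine Det15.superDer_ext_basis (Det15.superComm11 (hEodd i hi) (hEodd j hj))
      (Det15.isSuperDer_zero 0) fun k => ?_
    simp only [LinearMap.add_apply, LinearMap.comp_apply, LinearMap.zero_apply]
    by_cases hki : k = i
    · by_cases hkj : k = j
      · have hk0 : k ≠ 0 := by rw [hki]; exact hi
        rw [← hki, ← hkj, hEval k hk0, hE0 k hk0 k, hEval k hk0, hsq k]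
        simp
      · rw [← hki] at hi ⊢
        rw [hEval' j k hj fun hc => hkj hc, map_zero, hEval k hi, hE0 j hj k,
          hEval' j k hj fun hc => hkj hc]
        simp
    · by_cases hkj : k = j
      · rw [← hkj] at hj ⊢
        rw [hEval' i k hi fun hc => hki hc, map_zero, hEval k hj, hE0 i hi k,
          hEval' i k hi fun hc => hki hc]
        simp
      · rw [hEval' i k hi fun hc => hki hc, hEval' j k hj fun hc => hkj hc]
        simp
  have rel9 : ∀ i : Fin n, i ≠ 0 → D1 ∘ₗ E i + E i ∘ₗ D1 = h (Pi.single i 1) := by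
    intro i hi
    refine Det15.superDer_ext_basis (Det15.superComm11 hD1odd (hEodd i hi))
      (hEven _) fun j => ?_
    simp only [LinearMap.add_apply, LinearMap.comp_apply]
    by_cases hj : j = i
    · subst hj
      rw [hEval j hi, hD1val j hi, map_zero, add_zero,
        hD1odd.2 1 _ (Det15.ι_mem_lamPar (ev n 0)) (ι ℂ (ev n j)), hD1val₀,
        hD1val j hi, hVal, Det15.parSign_one_one]
      simp [Pi.single_eq_same]
    · rw [hEval' i j hi hj, map_zero, zero_add, hVal, Pi.single_eq_of_ne hj, zero_smul]
      by_cases hj0 : j = 0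
      · subst hj0
        rw [hD1val₀, Det15.superDer_one (hEodd i hi)]
      · rw [hD1val j hj0, map_zero]
  -- algebraic identities for the bracket
  have addl : ∀ (a b z : Lam n →ₗ[ℂ] Lam n),
      (a + b) ∘ₗ z - z ∘ₗ (a + b) = (a ∘ₗ z - z ∘ₗ a) + (b ∘ₗ z - z ∘ₗ b) := by
    intro a b z; rw [LinearMap.add_comp, LinearMap.comp_add]; abel
  have addr : ∀ (a y z : Lam n →ₗ[ℂ] Lam n),
      a ∘ₗ (y + z) - (y + z) ∘ₗ a = (a ∘ₗ y - y ∘ₗ a) + (a ∘ₗ z - z ∘ₗ a) := by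
    intro a y z; rw [LinearMap.comp_add, LinearMap.add_comp]; abel
  have smull : ∀ (r : ℂ) (a z : Lam n →ₗ[ℂ] Lam n),
      (r • a) ∘ₗ z - z ∘ₗ (r • a) = r • (a ∘ₗ z - z ∘ₗ a) := by
    intro r a z; rw [LinearMap.smul_comp, LinearMap.comp_smul, smul_sub]
  have smulr : ∀ (r : ℂ) (a z : Lam n →ₗ[ℂ] Lam n),
      a ∘ₗ (r • z) - (r • z) ∘ₗ a = r • (a ∘ₗ z - z ∘ₗ a) := by
    intro r a z; rw [LinearMap.comp_smul, LinearMap.smul_comp, smul_sub]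
  have addlp : ∀ (a b z : Lam n →ₗ[ℂ] Lam n),
      (a + b) ∘ₗ z + z ∘ₗ (a + b) = (a ∘ₗ z + z ∘ₗ a) + (b ∘ₗ z + z ∘ₗ b) := by
    intro a b z; rw [LinearMap.add_comp, LinearMap.comp_add]; abel
  have addrp : ∀ (a y z : Lam n →ₗ[ℂ] Lam n),
      a ∘ₗ (y + z) + (y + z) ∘ₗ a = (a ∘ₗ y + y ∘ₗ a) + (a ∘ₗ z + z ∘ₗ a) := by
    intro a y z; rw [LinearMap.comp_add, LinearMap.add_comp]; abel
  have smullp : ∀ (r : ℂ) (a z : Lam n →ₗ[ℂ] Lam n),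
      (r • a) ∘ₗ z + z ∘ₗ (r • a) = r • (a ∘ₗ z + z ∘ₗ a) := by
    intro r a z; rw [LinearMap.smul_comp, LinearMap.comp_smul, smul_add]
  have smulrp : ∀ (r : ℂ) (a z : Lam n →ₗ[ℂ] Lam n),
      a ∘ₗ (r • z) + (r • z) ∘ₗ a = r • (a ∘ₗ z + z ∘ₗ a) := by
    intro r a z; rw [LinearMap.comp_smul, LinearMap.smul_comp, smul_add]
  have hD1mem : D1 ∈ ({D1} ∪ {D'' | ∃ i : Fin n, i ≠ 0 ∧ D'' = E i} : Set _) :=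
    Set.mem_union_left _ rfl
  have hEmem : ∀ i : Fin n, i ≠ 0 →
      E i ∈ ({D1} ∪ {D'' | ∃ i : Fin n, i ≠ 0 ∧ D'' = E i} : Set _) :=
    fun i hi => Set.mem_union_right _ ⟨i, hi, rfl⟩
  refine ⟨?_, ?_, ?_, rel4, rel5, rel6, rel7, rel8, rel9⟩
  · -- part 1
    intro D hD D' hD'
    induction hD, hD' using Submodule.span_induction₂ with
    | mem_mem x y hx hy =>
      obtain ⟨c, rfl⟩ := hx; obtain ⟨c', rfl⟩ := hy
      rw [rel4]; exact zero_mem _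
    | zero_left y hy => simp
    | zero_right x hx => simp
    | add_left x y z hx hy hz h1 h2 => rw [addl]; exact add_mem h1 h2
    | add_right x y z hx hy hz h1 h2 => rw [addr]; exact add_mem h1 h2
    | smul_left r x y hx hy h1 => rw [smull]; exact Submodule.smul_mem _ _ h1
    | smul_right r x y hx hy h1 => rw [smulr]; exact Submodule.smul_mem _ _ h1
  · -- part 2
    intro D hD
    induction hD using Submodule.span_induction with
    | mem g hg =>
      obtain ⟨c, rfl⟩ := hg
      intro D' hD'
      induction hD' using Submodule.span_induction with
      | mem g' hg' =>
        rcases hg' with hg' | ⟨i, hi, rfl⟩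
        · rw [Set.mem_singleton_iff] at hg'
          subst hg'
          rw [rel5]
          exact Submodule.mem_sup_right
            (Submodule.smul_mem _ _ (Submodule.subset_span hD1mem))
        · rw [rel6 c i hi]
          exact Submodule.mem_sup_right
            (Submodule.smul_mem _ _ (Submodule.subset_span (hEmem i hi)))
      | zero => simp
      | add x y hx hy h1 h2 => rw [addr]; exact add_mem h1 h2
      | smul r x hx h1 => rw [smulr]; exact Submodule.smul_mem _ _ h1
    | zero => intro D' hD'; simp
    | add x y hx hy h1 h2 =>
      intro D' hD'; rw [addl]; exact add_mem (h1 D' hD') (h2 D' hD')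
    | smul r x hx h1 =>
      intro D' hD'; rw [smull]; exact Submodule.smul_mem _ _ (h1 D' hD')
  · -- part 3
    intro D hD D' hD'
    induction hD, hD' using Submodule.span_induction₂ with
    | mem_mem x y hx hy =>
      rcases hx with hx | ⟨i, hi, rfl⟩ <;> rcases hy with hy | ⟨j, hj, rfl⟩
      · rw [Set.mem_singleton_iff] at hx hy; subst hx; subst hy
        rw [rel7]; exact zero_mem _
      · rw [Set.mem_singleton_iff] at hx; subst hx
        rw [rel9 j hj]
        exact Submodule.mem_sup_left (Submodule.subset_span ⟨_, rfl⟩)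
      · rw [Set.mem_singleton_iff] at hy; subst hy
        rw [add_comm, rel9 i hi]
        exact Submodule.mem_sup_left (Submodule.subset_span ⟨_, rfl⟩)
      · rw [rel8 i j hi hj]; exact zero_mem _
    | zero_left y hy => simp
    | zero_right x hx => simp
    | add_left x y z hx hy hz h1 h2 => rw [addlp]; exact add_mem h1 h2
    | add_right x y z hx hy hz h1 h2 => rw [addrp]; exact add_mem h1 h2
    | smul_left r x y hx hy h1 => rw [smullp]; exact Submodule.smul_mem _ _ h1
    | smul_right r x y hx hy h1 => rw [smulrp]; exact Submodule.smul_mem _ _ h1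

end
end
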